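/- For positive integers $c, d$ with $d \ge 1$, the graph $K_c \vee ((d+1) K_1)$ satisfies $I'(K_c \vee ((d+1) K_1)) = \frac{c}{d}$. -/

import Mathlib

open SimpleGraph

noncomputable def isoCount {V : Type*} (G : SimpleGraph V) (S : Set V) : ℕ :=
  {v | v ∉ S ∧ ∀ w, G.Adj v w → w ∈ S}.ncard

noncomputable def isoTough {V : Type*} [Fintype V] (G : SimpleGraph V) : ℝ :=
  sInf {x : ℝ | ∃ S : Set V, 2 ≤ isoCount G S ∧ x = (S.ncard : ℝ) / (isoCount G S : ℝ)}

noncomputable def isoToughVar {V : Type*} [Fintype V] (G : SimpleGraph V) : ℝ :=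
  sInf {x : ℝ | ∃ S : Set V, 2 ≤ isoCount G S ∧ x = (S.ncard : ℝ) / ((isoCount G S : ℝ) - 1)}

/-- The join `K_c ∨ (d K_1)`. -/
def joinKE (c d : ℕ) : SimpleGraph (Fin c ⊕ Fin d) where
  Adj x y := x ≠ y ∧ (x.isLeft ∨ y.isLeft)
  symm := by constructor; intro x y h; tauto
  loopless := by constructor; intro x h; exact h.1 rfl

/-- The star `K_{1,n-1}`: join of one center with `n-1` leaves. -/
def starGraph (n : ℕ) : SimpleGraph (Fin 1 ⊕ Fin (n-1)) := joinKE 1 (n-1)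

/-- The graph `G_l = K_{l-1} ∨ (l K_k)`. -/
def Gl (k l : ℕ) : SimpleGraph (Fin (l-1) ⊕ Fin l × Fin k) where
  Adj x y := x ≠ y ∧ (x.isLeft ∨ y.isLeft ∨
    ∃ i p q, x = Sum.inr (i, p) ∧ y = Sum.inr (i, q))
  symm := by
    constructor
    rintro x y ⟨h1, h2⟩
    refine ⟨h1.symm, ?_⟩
    rcases h2 with h | h | ⟨i, p, q, hx, hy⟩
    · tauto
    · tauto
    · exact Or.inr (Or.inr ⟨i, q, p, hy, hx⟩)
  loopless := ⟨fun x h => h.1 rfl⟩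

noncomputable instance GlDec (k l : ℕ) : DecidableRel (Gl k l).Adj := Classical.decRel _



lemma ncard_range_sum_inl (c d : ℕ) :
    (Set.range (Sum.inl : Fin c → Fin c ⊕ Fin d)).ncard = c := by
  rw [show (Set.range (Sum.inl : Fin c → Fin c ⊕ Fin d)) = Sum.inl '' Set.univ by simp,
    Set.ncard_image_of_injective _ Sum.inl_injective, Set.ncard_univ, Nat.card_eq_fintype_card,
    Fintype.card_fin]

lemma ncard_range_sum_inr (c d : ℕ) :
    (Set.range (Sum.inr : Fin d → Fin c ⊕ Fin d)).ncard = d := by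
  rw [show (Set.range (Sum.inr : Fin d → Fin c ⊕ Fin d)) = Sum.inr '' Set.univ by simp,
    Set.ncard_image_of_injective _ Sum.inr_injective, Set.ncard_univ, Nat.card_eq_fintype_card,
    Fintype.card_fin]

lemma joinKE_structure (c d : ℕ) (S : Set (Fin c ⊕ Fin (d+1)))
    (h2 : 2 ≤ isoCount (joinKE c (d+1)) S) :
    ∃ t : ℕ, t + 2 ≤ d + 1 ∧ S.ncard = c + t ∧
      isoCount (joinKE c (d+1)) S = (d+1) - t := by
  classical
  set I : Set (Fin c ⊕ Fin (d+1)) :=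
    {v | v ∉ S ∧ ∀ w, (joinKE c (d+1)).Adj v w → w ∈ S} with hI
  have hIcard : 2 ≤ I.ncard := h2
  -- there is an isolated right vertex
  have hright : ∃ j : Fin (d+1), Sum.inr j ∈ I := by
    obtain ⟨v, w, hv, hw, hvw⟩ := (Set.one_lt_ncard_iff (Set.toFinite I)).mp
      (by omega)
    have hnadj : ¬ (joinKE c (d+1)).Adj v w := fun h => hw.1 (hv.2 w h)
    have : ¬ (v.isLeft ∨ w.isLeft) := fun h => hnadj ⟨hvw, h⟩
    rcases v with i | j
    · simp at this
    · exact ⟨j, hv⟩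
  obtain ⟨j0, hj0⟩ := hright
  -- every left vertex is in S
  have hleft : ∀ i : Fin c, Sum.inl i ∈ S := by
    intro i
    exact hj0.2 (Sum.inl i) ⟨by simp, by simp⟩
  -- I is the set of right vertices not in S
  have hIeq : I = Set.range Sum.inr \ S := by
    ext v
    rcases v with i | j
    · simp only [hI, Set.mem_setOf_eq, Set.mem_diff, Set.mem_range]
      constructor
      · rintro ⟨h, -⟩; exact absurd (hleft i) h
      · rintro ⟨⟨j, h⟩, -⟩; exact absurd h (by simp)
    · simp only [hI, Set.mem_setOf_eq, Set.mem_diff, Set.mem_range]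
      constructor
      · rintro ⟨h, -⟩; exact ⟨⟨j, rfl⟩, h⟩
      · rintro ⟨-, h⟩
        refine ⟨h, fun w hw => ?_⟩
        rcases hw with ⟨hne, hl⟩
        rcases w with i | j'
        · exact hleft i
        · simp at hl
  set t := (Set.range (Sum.inr : Fin (d+1) → Fin c ⊕ Fin (d+1)) ∩ S).ncard with ht
  have htle : t ≤ d + 1 := by
    have h := Set.ncard_le_ncard
      (Set.inter_subset_left (s := Set.range (Sum.inr : Fin (d+1) → Fin c ⊕ Fin (d+1))) (t := S))
      (Set.toFinite _)
    rwa [ncard_range_sum_inr] at h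
  have hIcount : isoCount (joinKE c (d+1)) S = (d+1) - t := by
    show I.ncard = _
    rw [hIeq, show Set.range (Sum.inr : Fin (d+1) → Fin c ⊕ Fin (d+1)) \ S =
        Set.range Sum.inr \ (Set.range Sum.inr ∩ S) by rw [Set.diff_self_inter],
      Set.ncard_diff Set.inter_subset_left (Set.toFinite _), ncard_range_sum_inr]
  have hScard : S.ncard = c + t := by
    have hSeq : S = Set.range Sum.inl ∪ (Set.range Sum.inr ∩ S) := by
      ext v
      rcases v with i | j
      · simp [hleft i]
      · constructor
        · intro h; exact Or.inr ⟨⟨j, rfl⟩, h⟩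
        · rintro (⟨i, h⟩ | ⟨-, h⟩)
          · exact absurd h (by simp)
          · exact h
    rw [hSeq, Set.ncard_union_eq ?_ (Set.toFinite _) (Set.toFinite _),
      ncard_range_sum_inl]
    · rintro x hx1 hx2
      intro y hy
      have h1 := hx1 hy
      have h2 := (hx2 hy).1
      obtain ⟨i, rfl⟩ := h1
      obtain ⟨j, h⟩ := h2
      exact absurd h (by simp)
  refine ⟨t, ?_, hScard, hIcount⟩
  have := h2
  rw [hIcount] at this
  omega

theorem joinKE_isoToughVar (c d : ℕ) (hc : 1 ≤ c) (hd : 1 ≤ d) :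
    isoToughVar (joinKE c (d + 1)) = (c : ℝ) / (d : ℝ) := by
  classical
  set A := {x : ℝ | ∃ S : Set (Fin c ⊕ Fin (d+1)), 2 ≤ isoCount (joinKE c (d+1)) S ∧
      x = (S.ncard : ℝ) / ((isoCount (joinKE c (d+1)) S : ℝ) - 1)} with hA
  have hiso0 : isoCount (joinKE c (d+1)) (Set.range Sum.inl) = d + 1 := by
    unfold isoCount
    have : {v : Fin c ⊕ Fin (d+1) | v ∉ Set.range Sum.inl ∧
        ∀ w, (joinKE c (d+1)).Adj v w → w ∈ Set.range Sum.inl} = Set.range Sum.inr := by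
      ext v
      rcases v with i | j
      · simp
      · simp only [Set.mem_setOf_eq, Set.mem_range]
        constructor
        · intro _; exact ⟨j, rfl⟩
        · intro _
          refine ⟨by simp, fun w hw => ?_⟩
          rcases hw with ⟨hne, hl⟩
          rcases w with i | j''
          · exact ⟨i, rfl⟩
          · simp at hl
    rw [this, ncard_range_sum_inr]
  have hmem : (c : ℝ) / (d : ℝ) ∈ A := by
    refine ⟨Set.range Sum.inl, by omega, ?_⟩
    rw [hiso0, ncard_range_sum_inl]
    push_cast
    ring_nf
  have hlb : ∀ x ∈ A, (c : ℝ) / (d : ℝ) ≤ x := by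
    rintro x ⟨S, h2, rfl⟩
    obtain ⟨t, htle, hS, hI⟩ := joinKE_structure c d S h2
    rw [hS, hI]
    have hcast : ((d + 1 - t : ℕ) : ℝ) = (d : ℝ) + 1 - t := by
      push_cast [Nat.cast_sub (by omega : t ≤ d + 1)]
      ring
    rw [hcast]
    have hd0 : (0 : ℝ) < d := by exact_mod_cast hd
    have htd : (t : ℝ) + 1 ≤ d := by
      have h : t + 1 ≤ d := by omega
      exact_mod_cast h
    have hdt : (0 : ℝ) < (d : ℝ) + 1 - t - 1 := by linarith
    have ht0 : (0 : ℝ) ≤ t := Nat.cast_nonneg t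
    have hc0 : (0 : ℝ) ≤ c := Nat.cast_nonneg c
    rw [div_le_div_iff₀ hd0 hdt]
    push_cast
    nlinarith
  rw [show isoToughVar (joinKE c (d + 1)) = sInf A from by rw [hA]; rfl]
  exact le_antisymm (csInf_le ⟨(c : ℝ) / d, fun x hx => hlb x hx⟩ hmem)
    (le_csInf ⟨_, hmem⟩ hlb)
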